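/- arXiv:1104.0607 — 5 statements merged into one kernel-verified Lean document; each statement's English description precedes it below -/
import Mathlib

section
/- Elimination of classical disjunction (Lemma 2a): for every MDL formula φ there exist a positive integer m with m ≤ 2^{|φ|} and ⊘-free MDL formulas ψ₁,…,ψ_m such that for every frame W and every team T, W,T ⊨ φ if and only if W,T ⊨ ψ_i for some i ∈ {1,…,m}. Here |φ| denotes the length (number of symbols) of φ. -/
/-- Formulas of modal dependence logic over atomic propositions `AP`.
Negation occurs only in front of atoms (`natom`) and dependence atoms (`ndep`).
`dep ps q` is the dependence atom dep(p₁,…,p_{n-1};p_n) with `ps` the list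
p₁,…,p_{n-1} and `q = p_n`.  `or` is dependence disjunction ∨ and
`cor` is classical disjunction ⊘. -/
inductive MDL (AP : Type) : Type
  | top : MDL AP
  | bot : MDL AP
  | atom : AP → MDL AP
  | natom : AP → MDL AP
  | dep : List AP → AP → MDL AP
  | ndep : List AP → AP → MDL AP
  | and : MDL AP → MDL AP → MDL AP
  | or : MDL AP → MDL AP → MDL AP
  | cor : MDL AP → MDL AP → MDL AP
  | box : MDL AP → MDL AP
  | dia : MDL AP → MDL AP

/-- A Kripke frame `W = (S, R, π)`. -/
structure Frame (AP : Type) where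
  S : Type
  R : S → S → Prop
  pi : S → Set AP

/-- Team semantics of MDL: `sat W φ T` means `W, T ⊨ φ`. -/
def sat {AP : Type} (W : Frame AP) : MDL AP → Set W.S → Prop
  | .top, _ => True
  | .bot, T => T = ∅
  | .atom p, T => ∀ s ∈ T, p ∈ W.pi s
  | .natom p, T => ∀ s ∈ T, p ∉ W.pi s
  | .dep ps q, T => ∀ s₁ ∈ T, ∀ s₂ ∈ T,
      (∀ p ∈ ps, (p ∈ W.pi s₁ ↔ p ∈ W.pi s₂)) → (q ∈ W.pi s₁ ↔ q ∈ W.pi s₂)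
  | .ndep _ _, T => T = ∅
  | .and φ ψ, T => sat W φ T ∧ sat W ψ T
  | .or φ ψ, T => ∃ T₁ T₂, T = T₁ ∪ T₂ ∧ sat W φ T₁ ∧ sat W ψ T₂
  | .cor φ ψ, T => sat W φ T ∨ sat W ψ T
  | .box φ, T => sat W φ {s' | ∃ s ∈ T, W.R s s'}
  | .dia φ, T => ∃ T' : Set W.S, sat W φ T' ∧ ∀ s ∈ T, ∃ s' ∈ T', W.R s s'

/-- A formula is satisfiable iff some frame and nonempty team satisfy it. -/
def satisfiable {AP : Type} (φ : MDL AP) : Prop :=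
  ∃ (W : Frame AP) (T : Set W.S), T.Nonempty ∧ sat W φ T

/-- A formula is ⊘-free if it contains no classical disjunction. -/
def corFree {AP : Type} : MDL AP → Prop
  | .cor _ _ => False
  | .and φ ψ => corFree φ ∧ corFree ψ
  | .or φ ψ => corFree φ ∧ corFree ψ
  | .box φ => corFree φ
  | .dia φ => corFree φ
  | _ => True

/-- The length (number of symbols) of a formula. -/
def size {AP : Type} : MDL AP → ℕ
  | .top => 1
  | .bot => 1
  | .atom _ => 1
  | .natom _ => 2
  | .dep ps _ => ps.length + 2
  | .ndep ps _ => ps.length + 3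
  | .and φ ψ => size φ + size ψ + 1
  | .or φ ψ => size φ + size ψ + 1
  | .cor φ ψ => size φ + size ψ + 1
  | .box φ => size φ + 1
  | .dia φ => size φ + 1

theorem cor_elim_list {AP : Type} (φ : MDL AP) :
    ∃ l : List (MDL AP), l ≠ [] ∧ l.length ≤ 2 ^ size φ ∧
      (∀ ψ ∈ l, corFree ψ) ∧
      ∀ (W : Frame AP) (T : Set W.S), sat W φ T ↔ ∃ ψ ∈ l, sat W ψ T := by
  induction φ with
  | top => exact ⟨[.top], by simp, by simp [size], by simp [corFree], by simp⟩
  | bot => exact ⟨[.bot], by simp, by simp [size], by simp [corFree], by simp⟩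
  | atom p => exact ⟨[.atom p], by simp, by simp [size], by simp [corFree], by simp⟩
  | natom p => exact ⟨[.natom p], by simp, by simp [size], by simp [corFree], by simp⟩
  | dep ps q =>
    exact ⟨[.dep ps q], by simp, by simpa [size] using Nat.one_le_two_pow,
      by simp [corFree], by simp⟩
  | ndep ps q =>
    exact ⟨[.ndep ps q], by simp, by simpa [size] using Nat.one_le_two_pow,
      by simp [corFree], by simp⟩
  | and φ ψ ihφ ihψ =>
    obtain ⟨l₁, h₁ne, h₁len, h₁cf, h₁sat⟩ := ihφ
    obtain ⟨l₂, h₂ne, h₂len, h₂cf, h₂sat⟩ := ihψ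
    refine ⟨(l₁ ×ˢ l₂).map fun p => .and p.1 p.2, ?_, ?_, ?_, ?_⟩
    · obtain ⟨a, ha⟩ := List.exists_mem_of_ne_nil l₁ h₁ne
      obtain ⟨b, hb⟩ := List.exists_mem_of_ne_nil l₂ h₂ne
      exact List.ne_nil_of_mem (List.mem_map.2 ⟨(a, b), List.mem_product.2 ⟨ha, hb⟩, rfl⟩)
    · rw [List.length_map, List.length_product]
      calc l₁.length * l₂.length ≤ 2 ^ size φ * 2 ^ size ψ :=
            Nat.mul_le_mul h₁len h₂len
        _ = 2 ^ (size φ + size ψ) := (pow_add 2 _ _).symm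
        _ ≤ 2 ^ size (φ.and ψ) := Nat.pow_le_pow_right (by norm_num) (by simp [size])
    · intro χ hχ
      obtain ⟨⟨a, b⟩, hab, rfl⟩ := List.mem_map.1 hχ
      obtain ⟨ha, hb⟩ := List.mem_product.1 hab
      exact ⟨h₁cf a ha, h₂cf b hb⟩
    · intro W T
      constructor
      · rintro ⟨hφ, hψ⟩
        obtain ⟨a, ha, hsa⟩ := (h₁sat W T).1 hφ
        obtain ⟨b, hb, hsb⟩ := (h₂sat W T).1 hψ
        exact ⟨.and a b, List.mem_map.2 ⟨(a, b), List.mem_product.2 ⟨ha, hb⟩, rfl⟩, hsa, hsb⟩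
      · rintro ⟨χ, hχ, hs⟩
        obtain ⟨⟨a, b⟩, hab, rfl⟩ := List.mem_map.1 hχ
        obtain ⟨ha, hb⟩ := List.mem_product.1 hab
        exact ⟨(h₁sat W T).2 ⟨a, ha, hs.1⟩, (h₂sat W T).2 ⟨b, hb, hs.2⟩⟩
  | or φ ψ ihφ ihψ =>
    obtain ⟨l₁, h₁ne, h₁len, h₁cf, h₁sat⟩ := ihφ
    obtain ⟨l₂, h₂ne, h₂len, h₂cf, h₂sat⟩ := ihψ
    refine ⟨(l₁ ×ˢ l₂).map fun p => .or p.1 p.2, ?_, ?_, ?_, ?_⟩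
    · obtain ⟨a, ha⟩ := List.exists_mem_of_ne_nil l₁ h₁ne
      obtain ⟨b, hb⟩ := List.exists_mem_of_ne_nil l₂ h₂ne
      exact List.ne_nil_of_mem (List.mem_map.2 ⟨(a, b), List.mem_product.2 ⟨ha, hb⟩, rfl⟩)
    · rw [List.length_map, List.length_product]
      calc l₁.length * l₂.length ≤ 2 ^ size φ * 2 ^ size ψ :=
            Nat.mul_le_mul h₁len h₂len
        _ = 2 ^ (size φ + size ψ) := (pow_add 2 _ _).symm
        _ ≤ 2 ^ size (φ.or ψ) := Nat.pow_le_pow_right (by norm_num) (by simp [size])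
    · intro χ hχ
      obtain ⟨⟨a, b⟩, hab, rfl⟩ := List.mem_map.1 hχ
      obtain ⟨ha, hb⟩ := List.mem_product.1 hab
      exact ⟨h₁cf a ha, h₂cf b hb⟩
    · intro W T
      constructor
      · rintro ⟨T₁, T₂, hT, hφ, hψ⟩
        obtain ⟨a, ha, hsa⟩ := (h₁sat W T₁).1 hφ
        obtain ⟨b, hb, hsb⟩ := (h₂sat W T₂).1 hψ
        exact ⟨.or a b, List.mem_map.2 ⟨(a, b), List.mem_product.2 ⟨ha, hb⟩, rfl⟩,
          T₁, T₂, hT, hsa, hsb⟩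
      · rintro ⟨χ, hχ, hs⟩
        obtain ⟨⟨a, b⟩, hab, rfl⟩ := List.mem_map.1 hχ
        obtain ⟨ha, hb⟩ := List.mem_product.1 hab
        obtain ⟨T₁, T₂, hT, hsa, hsb⟩ := hs
        exact ⟨T₁, T₂, hT, (h₁sat W T₁).2 ⟨a, ha, hsa⟩, (h₂sat W T₂).2 ⟨b, hb, hsb⟩⟩
  | cor φ ψ ihφ ihψ =>
    obtain ⟨l₁, h₁ne, h₁len, h₁cf, h₁sat⟩ := ihφ
    obtain ⟨l₂, h₂ne, h₂len, h₂cf, h₂sat⟩ := ihψ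
    refine ⟨l₁ ++ l₂, by simp [h₁ne], ?_, ?_, ?_⟩
    · rw [List.length_append]
      calc l₁.length + l₂.length ≤ 2 ^ size φ + 2 ^ size ψ := Nat.add_le_add h₁len h₂len
        _ ≤ 2 ^ (size φ + size ψ) + 2 ^ (size φ + size ψ) :=
            Nat.add_le_add (Nat.pow_le_pow_right (by norm_num) (by omega))
              (Nat.pow_le_pow_right (by norm_num) (by omega))
        _ = 2 ^ (size φ + size ψ + 1) := by ring
        _ = 2 ^ size (φ.cor ψ) := by simp [size]
    · intro χ hχ
      rcases List.mem_append.1 hχ with h | h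
      exacts [h₁cf χ h, h₂cf χ h]
    · intro W T
      constructor
      · rintro (h | h)
        · obtain ⟨a, ha, hsa⟩ := (h₁sat W T).1 h
          exact ⟨a, List.mem_append.2 (Or.inl ha), hsa⟩
        · obtain ⟨b, hb, hsb⟩ := (h₂sat W T).1 h
          exact ⟨b, List.mem_append.2 (Or.inr hb), hsb⟩
      · rintro ⟨χ, hχ, hs⟩
        rcases List.mem_append.1 hχ with h | h
        · exact Or.inl ((h₁sat W T).2 ⟨χ, h, hs⟩)
        · exact Or.inr ((h₂sat W T).2 ⟨χ, h, hs⟩)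
  | box φ ih =>
    obtain ⟨l, hne, hlen, hcf, hsat⟩ := ih
    refine ⟨l.map .box, by simp [hne], ?_, ?_, ?_⟩
    · rw [List.length_map]
      exact le_trans hlen (Nat.pow_le_pow_right (by norm_num) (by simp [size]))
    · intro χ hχ
      obtain ⟨a, ha, rfl⟩ := List.mem_map.1 hχ
      exact hcf a ha
    · intro W T
      constructor
      · intro h
        obtain ⟨a, ha, hsa⟩ := (hsat W _).1 h
        exact ⟨.box a, List.mem_map.2 ⟨a, ha, rfl⟩, hsa⟩
      · rintro ⟨χ, hχ, hs⟩
        obtain ⟨a, ha, rfl⟩ := List.mem_map.1 hχ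
        exact (hsat W _).2 ⟨a, ha, hs⟩
  | dia φ ih =>
    obtain ⟨l, hne, hlen, hcf, hsat⟩ := ih
    refine ⟨l.map .dia, by simp [hne], ?_, ?_, ?_⟩
    · rw [List.length_map]
      exact le_trans hlen (Nat.pow_le_pow_right (by norm_num) (by simp [size]))
    · intro χ hχ
      obtain ⟨a, ha, rfl⟩ := List.mem_map.1 hχ
      exact hcf a ha
    · intro W T
      constructor
      · rintro ⟨T', hT', hcov⟩
        obtain ⟨a, ha, hsa⟩ := (hsat W T').1 hT'
        exact ⟨.dia a, List.mem_map.2 ⟨a, ha, rfl⟩, T', hsa, hcov⟩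
      · rintro ⟨χ, hχ, hs⟩
        obtain ⟨a, ha, rfl⟩ := List.mem_map.1 hχ
        obtain ⟨T', hT', hcov⟩ := hs
        exact ⟨T', (hsat W T').2 ⟨a, ha, hT'⟩, hcov⟩

/-- elimination of classical disjunction (Lemma 2a). -/
theorem cor_elimination {AP : Type} (φ : MDL AP) :
    ∃ (m : ℕ), 0 < m ∧ m ≤ 2 ^ size φ ∧
      ∃ ψ : Fin m → MDL AP, (∀ i, corFree (ψ i)) ∧
        ∀ (W : Frame AP) (T : Set W.S), sat W φ T ↔ ∃ i, sat W (ψ i) T := by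
  obtain ⟨l, hne, hlen, hcf, hsat⟩ := cor_elim_list φ
  refine ⟨l.length, List.length_pos_iff.2 hne, hlen, fun i => l.get i,
    fun i => hcf _ (l.get_mem i), fun W T => ?_⟩
  rw [hsat W T]
  constructor
  · rintro ⟨χ, hχ, hs⟩
    obtain ⟨i, hi, rfl⟩ := List.mem_iff_get.1 hχ
    exact ⟨_, hs⟩
  · rintro ⟨i, hs⟩
    exact ⟨l.get i, l.get_mem i, hs⟩
end

section
/- Full-labeling lemma: let φ be a negation-free MDL formula and W = (S,R,π) a frame with W,T ⊨ φ for a team T. Let W' = (S,R,π') be the frame with the same worlds and accessibility relation but with π'(s) = AP for every world s (every atomic proposition true everywhere). Then W',T ⊨ φ. -/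
/-- A formula is negation-free if it contains no ¬p and no ¬dep(…;…). -/
def negFree {AP : Type} : MDL AP → Prop
  | .natom _ => False
  | .ndep _ _ => False
  | .and φ ψ => negFree φ ∧ negFree ψ
  | .or φ ψ => negFree φ ∧ negFree ψ
  | .cor φ ψ => negFree φ ∧ negFree ψ
  | .box φ => negFree φ
  | .dia φ => negFree φ
  | _ => True

/-- full-labeling lemma for negation-free formulas. -/
theorem full_labeling {AP : Type} (φ : MDL AP) (hφ : negFree φ)
    (W : Frame AP) (T : Set W.S) (h : sat W φ T) :
    sat ({ S := W.S, R := W.R, pi := fun _ => (Set.univ : Set AP) } : Frame AP) φ T := by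
  induction φ generalizing T with
  | top => trivial
  | bot => exact h
  | atom p => intro s _; simp [Set.mem_univ]
  | natom p => exact absurd hφ (by simp [negFree])
  | dep ps q => intro s₁ _ s₂ _ _; simp
  | ndep ps q => exact absurd hφ (by simp [negFree])
  | and φ ψ ihφ ihψ => exact ⟨ihφ hφ.1 _ h.1, ihψ hφ.2 _ h.2⟩
  | or φ ψ ihφ ihψ =>
      obtain ⟨T₁, T₂, hT, h₁, h₂⟩ := h
      exact ⟨T₁, T₂, hT, ihφ hφ.1 _ h₁, ihψ hφ.2 _ h₂⟩
  | cor φ ψ ihφ ihψ =>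
      rcases h with h | h
      · exact Or.inl (ihφ hφ.1 _ h)
      · exact Or.inr (ihψ hφ.2 _ h)
  | box φ ihφ => exact ihφ hφ _ h
  | dia φ ihφ =>
      obtain ⟨T', h₁, h₂⟩ := h
      exact ⟨T', ihφ hφ _ h₁, h₂⟩
end

section
/- Claim 1 of Theorem 5 (poor man's modal logic): let r, s ≥ 0 and let φ₁,…,φ_r, ψ₁,…,ψ_s be MDL formulas built from literals and the constants ⊤, ⊥ using only ∧, □, ◇ (no ∨, no ⊘, no dependence atoms). Then the formula ◇φ₁ ∧ … ∧ ◇φ_r ∧ □ψ₁ ∧ … ∧ □ψ_s is unsatisfiable if and only if there exists i ∈ {1,…,r} such that φ_i ∧ ψ₁ ∧ … ∧ ψ_s is unsatisfiable. (In particular, for r = 0 the formula is always satisfiable.) -/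
/-- Poor man's formulas: built from literals and ⊤, ⊥ using only ∧, □, ◇. -/
def poorMan {AP : Type} : MDL AP → Prop
  | .top => True
  | .bot => True
  | .atom _ => True
  | .natom _ => True
  | .and φ ψ => poorMan φ ∧ poorMan ψ
  | .box φ => poorMan φ
  | .dia φ => poorMan φ
  | _ => False

/-- Conjunction of a list of formulas (empty conjunction is ⊤). -/
def bigAnd {AP : Type} : List (MDL AP) → MDL AP
  | [] => .top
  | φ :: l => .and φ (bigAnd l)

-- AUX
lemma sat_bigAnd {AP : Type} (W : Frame AP) (l : List (MDL AP)) (T : Set W.S) :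
    sat W (bigAnd l) T ↔ ∀ χ ∈ l, sat W χ T := by
  induction l with
  | nil => simp [bigAnd, sat]
  | cons a l ih => simp [bigAnd, sat, ih]

lemma sat_mono {AP : Type} (W : Frame AP) (φ : MDL AP) :
    ∀ T T' : Set W.S, T' ⊆ T → sat W φ T → sat W φ T' := by
  induction φ with
  | top => intro T T' h hs; trivial
  | bot => intro T T' h hs; simpa [sat] using Set.subset_empty_iff.mp (hs ▸ h)
  | atom p => intro T T' h hs s hsT; exact hs s (h hsT)
  | natom p => intro T T' h hs s hsT; exact hs s (h hsT)
  | dep ps q => intro T T' h hs s₁ h₁ s₂ h₂; exact hs s₁ (h h₁) s₂ (h h₂)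
  | ndep ps q => intro T T' h hs; simpa [sat] using Set.subset_empty_iff.mp (hs ▸ h)
  | and φ ψ ihφ ihψ => intro T T' h hs; exact ⟨ihφ T T' h hs.1, ihψ T T' h hs.2⟩
  | or φ ψ ihφ ihψ =>
      intro T T' h hs
      obtain ⟨T₁, T₂, rfl, h₁, h₂⟩ := hs
      refine ⟨T₁ ∩ T', T₂ ∩ T', ?_, ihφ T₁ _ Set.inter_subset_left h₁,
        ihψ T₂ _ Set.inter_subset_left h₂⟩
      rw [← Set.union_inter_distrib_right]
      exact (Set.inter_eq_right.mpr h).symm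
  | cor φ ψ ihφ ihψ =>
      intro T T' h hs
      rcases hs with hs | hs
      · exact Or.inl (ihφ T T' h hs)
      · exact Or.inr (ihψ T T' h hs)
  | box φ ih =>
      intro T T' h hs
      exact ih _ _ (fun x hx => by obtain ⟨s, hsT, hR⟩ := hx; exact ⟨s, h hsT, hR⟩) hs
  | dia φ ih =>
      intro T T' h hs
      obtain ⟨U, hU, hall⟩ := hs
      exact ⟨U, hU, fun s hsT => hall s (h hsT)⟩

lemma sat_iUnion {AP : Type} (W : Frame AP) {φ : MDL AP} (hp : poorMan φ) :
    ∀ {ι : Type} (T : ι → Set W.S), (∀ i, sat W φ (T i)) → sat W φ (⋃ i, T i) := by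
  induction φ with
  | top => intro ι T h; trivial
  | bot => intro ι T h; simpa [sat] using fun i => h i
  | atom p => intro ι T h s hs; obtain ⟨_, ⟨i, rfl⟩, hsi⟩ := hs; exact h i s hsi
  | natom p => intro ι T h s hs; obtain ⟨_, ⟨i, rfl⟩, hsi⟩ := hs; exact h i s hsi
  | and φ ψ ihφ ihψ =>
      intro ι T h; exact ⟨ihφ hp.1 T (fun i => (h i).1), ihψ hp.2 T (fun i => (h i).2)⟩
  | box φ ih =>
      intro ι T h
      have : {s' | ∃ s ∈ ⋃ i, T i, W.R s s'} = ⋃ i, {s' | ∃ s ∈ T i, W.R s s'} := by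
        ext x
        constructor
        · rintro ⟨s, hs, hR⟩
          obtain ⟨_, ⟨i, rfl⟩, hsi⟩ := hs
          exact Set.mem_iUnion.mpr ⟨i, s, hsi, hR⟩
        · intro hx
          obtain ⟨_, ⟨i, rfl⟩, s, hsi, hR⟩ := hx
          exact ⟨s, Set.mem_iUnion.mpr ⟨i, hsi⟩, hR⟩
      rw [show (sat W (MDL.box φ) (⋃ i, T i)) = sat W φ {s' | ∃ s ∈ ⋃ i, T i, W.R s s'} from rfl, this]
      exact ih hp _ (fun i => h i)
  | dia φ ih =>
      intro ι T h
      choose U hU hall using h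
      refine ⟨⋃ i, U i, ih hp U hU, ?_⟩
      intro s hs
      obtain ⟨_, ⟨i, rfl⟩, hsi⟩ := hs
      obtain ⟨s', hs', hR⟩ := hall i s hsi
      exact ⟨s', Set.mem_iUnion.mpr ⟨i, hs'⟩, hR⟩
  | dep ps q => exact absurd hp (by simp [poorMan])
  | ndep ps q => exact absurd hp (by simp [poorMan])
  | or φ ψ _ _ => exact absurd hp (by simp [poorMan])
  | cor φ ψ _ _ => exact absurd hp (by simp [poorMan])

lemma sat_embed {AP : Type} {W W' : Frame AP} (f : W.S → W'.S)
    (hpi : ∀ s, W'.pi (f s) = W.pi s)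
    (hR : ∀ s t, W.R s t → W'.R (f s) (f t))
    (hR' : ∀ s t', W'.R (f s) t' → ∃ t, t' = f t ∧ W.R s t) :
    ∀ (φ : MDL AP) (T : Set W.S), sat W φ T → sat W' φ (f '' T) := by
  intro φ
  induction φ with
  | top => intro T h; trivial
  | bot => intro T h; simp [sat] at h ⊢; simp [h]
  | atom p => rintro T h _ ⟨s, hs, rfl⟩; rw [hpi]; exact h s hs
  | natom p => rintro T h _ ⟨s, hs, rfl⟩; rw [hpi]; exact h s hs
  | dep ps q =>
      rintro T h _ ⟨s₁, h₁, rfl⟩ _ ⟨s₂, h₂, rfl⟩ hps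
      simp only [hpi] at hps ⊢
      exact h s₁ h₁ s₂ h₂ hps
  | ndep ps q => intro T h; simp [sat] at h ⊢; simp [h]
  | and φ ψ ihφ ihψ => intro T h; exact ⟨ihφ T h.1, ihψ T h.2⟩
  | or φ ψ ihφ ihψ =>
      intro T h
      obtain ⟨T₁, T₂, rfl, h₁, h₂⟩ := h
      exact ⟨f '' T₁, f '' T₂, Set.image_union f T₁ T₂, ihφ T₁ h₁, ihψ T₂ h₂⟩
  | cor φ ψ ihφ ihψ =>
      intro T h
      rcases h with h | h
      · exact Or.inl (ihφ T h)
      · exact Or.inr (ihψ T h)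
  | box φ ih =>
      intro T h
      have key : {s' | ∃ s ∈ f '' T, W'.R s s'} = f '' {t' | ∃ t ∈ T, W.R t t'} := by
        ext x
        constructor
        · rintro ⟨_, ⟨s, hs, rfl⟩, hRx⟩
          obtain ⟨t, rfl, ht⟩ := hR' s x hRx
          exact ⟨t, ⟨s, hs, ht⟩, rfl⟩
        · rintro ⟨t', ⟨t, ht, hRt⟩, rfl⟩
          exact ⟨f t, ⟨t, ht, rfl⟩, hR t t' hRt⟩
      show sat W' φ _
      rw [key]
      exact ih _ h
  | dia φ ih =>
      intro T h
      obtain ⟨U, hU, hall⟩ := h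
      refine ⟨f '' U, ih U hU, ?_⟩
      rintro _ ⟨s, hs, rfl⟩
      obtain ⟨s', hs', hRs⟩ := hall s hs
      exact ⟨f s', ⟨s', hs', rfl⟩, hR s s' hRs⟩

/-- Disjoint union of frames `Ws i` together with a fresh root `none`
whose successors are exactly the elements of the teams `Ts i`. -/
def combFrame {AP : Type} {n : ℕ} (Ws : Fin n → Frame AP)
    (Ts : ∀ i, Set (Ws i).S) : Frame AP where
  S := Option ((i : Fin n) × (Ws i).S)
  R := fun a b =>
    match a, b with
    | none, some ⟨i, t⟩ => t ∈ Ts i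
    | some ⟨i, s⟩, some ⟨j, t⟩ => ∃ h : i = j, (Ws j).R (h ▸ s) t
    | _, _ => False
  pi := fun a =>
    match a with
    | none => ∅
    | some ⟨i, s⟩ => (Ws i).pi s

lemma comb_embed {AP : Type} {n : ℕ} (Ws : Fin n → Frame AP)
    (Ts : ∀ i, Set (Ws i).S) (i : Fin n) (φ : MDL AP) (T : Set (Ws i).S)
    (h : sat (Ws i) φ T) :
    sat (combFrame Ws Ts) φ ((fun s => (some ⟨i, s⟩ : (combFrame Ws Ts).S)) '' T) := by
  refine sat_embed (W := Ws i) (W' := combFrame Ws Ts) (fun s => some ⟨i, s⟩)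
    (fun s => rfl) (fun s t hst => ⟨rfl, hst⟩) ?_ φ T h
  intro s t' hst
  match t' with
  | none => exact absurd hst (by simp [combFrame])
  | some ⟨j, t⟩ =>
      obtain ⟨hij, hr⟩ := hst
      subst hij
      exact ⟨t, rfl, hr⟩

lemma comb_succ {AP : Type} {n : ℕ} (Ws : Fin n → Frame AP)
    (Ts : ∀ i, Set (Ws i).S) :
    {s' | ∃ s ∈ ({none} : Set (combFrame Ws Ts).S), (combFrame Ws Ts).R s s'}
      = ⋃ i, (fun s => (some ⟨i, s⟩ : (combFrame Ws Ts).S)) '' Ts i := by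
  ext x
  constructor
  · rintro ⟨s, hs, hR⟩
    rcases hs with rfl
    match x with
    | none => exact absurd hR (by simp [combFrame])
    | some ⟨i, t⟩ =>
        exact Set.mem_iUnion.mpr ⟨i, t, hR, rfl⟩
  · intro hx
    obtain ⟨_, ⟨i, rfl⟩, t, ht, rfl⟩ := hx
    exact ⟨none, rfl, ht⟩


/-- Claim 1 of Theorem 5 (poor man's modal logic). -/
theorem poorman_claim1 {AP : Type} (φs ψs : List (MDL AP))
    (hφ : ∀ φ ∈ φs, poorMan φ) (hψ : ∀ ψ ∈ ψs, poorMan ψ) :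
    ¬ satisfiable (bigAnd (φs.map MDL.dia ++ ψs.map MDL.box)) ↔
      ∃ φ ∈ φs, ¬ satisfiable (bigAnd (φ :: ψs)) := by
  constructor
  · intro hunsat
    by_contra hno
    push_neg at hno
    apply hunsat
    have H : ∀ i : Fin φs.length, ∃ (W : Frame AP) (T : Set W.S),
        T.Nonempty ∧ sat W (bigAnd (φs.get i :: ψs)) T :=
      fun i => hno _ (φs.get_mem i)
    choose Ws Ts hne hsat using H
    refine ⟨combFrame Ws Ts, {none}, ⟨none, rfl⟩, ?_⟩
    rw [sat_bigAnd]
    intro χ hχ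
    rcases List.mem_append.mp hχ with hχ | hχ
    · obtain ⟨φ, hφmem, rfl⟩ := List.mem_map.mp hχ
      obtain ⟨i, rfl⟩ := List.mem_iff_get.mp hφmem
      have hsi := (sat_bigAnd _ _ _).mp (hsat i)
      refine ⟨(fun s => (some ⟨i, s⟩ : (combFrame Ws Ts).S)) '' Ts i,
        comb_embed Ws Ts i _ _ (hsi _ List.mem_cons_self), ?_⟩
      rintro s rfl
      obtain ⟨t, ht⟩ := hne i
      exact ⟨some ⟨i, t⟩, ⟨t, ht, rfl⟩, ht⟩
    · obtain ⟨ψ, hψmem, rfl⟩ := List.mem_map.mp hχ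
      show sat _ ψ _
      rw [comb_succ]
      apply sat_iUnion _ (hψ ψ hψmem)
      intro i
      have hsi := (sat_bigAnd _ _ _).mp (hsat i)
      exact comb_embed Ws Ts i _ _ (hsi ψ (List.mem_cons_of_mem _ hψmem))
  · rintro ⟨φ, hφmem, hunsat⟩ ⟨W, T, hTne, hT⟩
    rw [sat_bigAnd] at hT
    have hdia : sat W (MDL.dia φ) T :=
      hT _ (List.mem_append_left _ (List.mem_map.mpr ⟨φ, hφmem, rfl⟩))
    obtain ⟨T', hT', hall⟩ := hdia
    set RT : Set W.S := {s' | ∃ s ∈ T, W.R s s'} with hRT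
    apply hunsat
    refine ⟨W, T' ∩ RT, ?_, ?_⟩
    · obtain ⟨s, hs⟩ := hTne
      obtain ⟨s', hs', hR⟩ := hall s hs
      exact ⟨s', hs', s, hs, hR⟩
    · rw [sat_bigAnd]
      intro χ hχ
      rcases List.mem_cons.mp hχ with rfl | hχ
      · exact sat_mono W χ T' _ Set.inter_subset_left hT'
      · have hbox : sat W (MDL.box χ) T :=
          hT _ (List.mem_append_right _ (List.mem_map.mpr ⟨χ, hχ, rfl⟩))
        exact sat_mono W χ RT _ Set.inter_subset_right hbox
end

section
/- ◇-free formulas and intransitive singletons (Theorem 8, case ◇ ∉ M): an MDL formula φ containing no occurrence of the modality ◇ is satisfiable if and only if there is a labeling π₀ ⊆ AP such that the intransitive singleton frame W₀ — the frame with a single world w₀, empty accessibility relation, and π(w₀) = π₀ — satisfies W₀,{w₀} ⊨ φ. -/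
/-- A formula contains no occurrence of ◇. -/
def diaFree {AP : Type} : MDL AP → Prop
  | .dia _ => False
  | .and φ ψ => diaFree φ ∧ diaFree ψ
  | .or φ ψ => diaFree φ ∧ diaFree ψ
  | .cor φ ψ => diaFree φ ∧ diaFree ψ
  | .box φ => diaFree φ
  | _ => True

/-- The intransitive singleton with labeling π₀ : one world, no edges. -/
def intransSingleton (AP : Type) (π₀ : Set AP) : Frame AP :=
  { S := Unit, R := fun _ _ => False, pi := fun _ => π₀ }

/-- Empty team property: every formula is satisfied by the empty team. -/
lemma sat_empty {AP : Type} (W : Frame AP) (φ : MDL AP) : sat W φ ∅ := by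
  induction φ with
  | top => trivial
  | bot => rfl
  | atom p => intro s hs; exact absurd hs (Set.notMem_empty s)
  | natom p => intro s hs; exact absurd hs (Set.notMem_empty s)
  | dep ps q => intro s hs; exact absurd hs (Set.notMem_empty s)
  | ndep ps q => rfl
  | and φ ψ ih1 ih2 => exact ⟨ih1, ih2⟩
  | or φ ψ ih1 ih2 => exact ⟨∅, ∅, by simp, ih1, ih2⟩
  | cor φ ψ ih1 ih2 => exact Or.inl ih1
  | box φ ih =>
      show sat W φ {s' | ∃ s ∈ (∅ : Set W.S), W.R s s'}
      have h : {s' | ∃ s ∈ (∅ : Set W.S), W.R s s'} = ∅ := by simp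
      rw [h]; exact ih
  | dia φ ih => exact ⟨∅, ih, fun s hs => absurd hs (Set.notMem_empty s)⟩

lemma sat_singleton_of_sat {AP : Type} (φ : MDL AP) (hφ : diaFree φ)
    (W : Frame AP) (T : Set W.S) (s : W.S) (hs : s ∈ T) (h : sat W φ T) :
    sat (intransSingleton AP (W.pi s)) φ ({Unit.unit} : Set Unit) := by
  induction φ generalizing T with
  | top => trivial
  | bot => rw [h] at hs; exact absurd hs (Set.notMem_empty s)
  | atom p => intro t _; exact h s hs
  | natom p => intro t _; exact h s hs
  | dep ps q => intro s₁ _ s₂ _ _; rfl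
  | ndep ps q => rw [h] at hs; exact absurd hs (Set.notMem_empty s)
  | and φ ψ ih1 ih2 => exact ⟨ih1 hφ.1 T hs h.1, ih2 hφ.2 T hs h.2⟩
  | or φ ψ ih1 ih2 =>
      obtain ⟨T₁, T₂, hT, h1, h2⟩ := h
      rw [hT] at hs
      rcases hs with hs | hs
      · exact ⟨{Unit.unit}, ∅, by simp; rfl, ih1 hφ.1 T₁ hs h1, sat_empty _ _⟩
      · exact ⟨∅, {Unit.unit}, by simp; rfl, sat_empty _ _, ih2 hφ.2 T₂ hs h2⟩
  | cor φ ψ ih1 ih2 =>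
      rcases h with h | h
      · exact Or.inl (ih1 hφ.1 T hs h)
      · exact Or.inr (ih2 hφ.2 T hs h)
  | box φ ih =>
      show sat _ φ {s' | ∃ t ∈ ({Unit.unit} : Set Unit), (intransSingleton AP (W.pi s)).R t s'}
      have hempty : {s' | ∃ t ∈ ({Unit.unit} : Set Unit),
          (intransSingleton AP (W.pi s)).R t s'} = ∅ := by
        ext x; simp [intransSingleton]; rfl
      rw [hempty]; exact sat_empty _ _
  | dia φ ih => exact absurd hφ id

/-- ◇-free formulas are satisfiable iff satisfied in an
intransitive singleton. -/
theorem diaFree_sat_iff_intransSingleton {AP : Type} (φ : MDL AP) (hφ : diaFree φ) :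
    satisfiable φ ↔
      ∃ π₀ : Set AP,
        sat (intransSingleton AP π₀) φ ({Unit.unit} : Set (intransSingleton AP π₀).S) := by
  constructor
  · rintro ⟨W, T, ⟨s, hs⟩, h⟩
    exact ⟨W.pi s, sat_singleton_of_sat φ hφ W T s hs h⟩
  · rintro ⟨π₀, h⟩
    exact ⟨intransSingleton AP π₀, {Unit.unit}, ⟨Unit.unit, rfl⟩, h⟩
end

section
/- Singleton translation into ordinary modal logic (used in Theorem 10a, after Sevenster): for every MDL formula φ that contains no classical disjunction ⊘, there exists an MDL formula ψ containing neither dependence atoms (positive or negated) nor ⊘ — i.e. an ordinary modal logic formula over ⊤, ⊥, literals, ∧, ∨, □, ◇ — such that for every frame W and every world w of W: W,{w} ⊨ φ if and only if W,{w} ⊨ ψ. -/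
/-- Ordinary modal logic formulas: no dependence atoms (positive or negated)
and no classical disjunction ⊘. -/
def isML {AP : Type} : MDL AP → Prop
  | .dep _ _ => False
  | .ndep _ _ => False
  | .cor _ _ => False
  | .and φ ψ => isML φ ∧ isML ψ
  | .or φ ψ => isML φ ∧ isML ψ
  | .box φ => isML φ
  | .dia φ => isML φ
  | _ => True

open Classical

/-- Classical Kripke semantics for ML formulas (dep/ndep/cor: dummy `False`). -/
def csat {AP : Type} (W : Frame AP) : MDL AP → W.S → Prop
  | .top, _ => True
  | .bot, _ => False
  | .atom p, s => p ∈ W.pi s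
  | .natom p, s => p ∉ W.pi s
  | .dep _ _, _ => False
  | .ndep _ _, _ => False
  | .and a b, s => csat W a s ∧ csat W b s
  | .or a b, s => csat W a s ∨ csat W b s
  | .cor a b, s => csat W a s ∨ csat W b s
  | .box a, s => ∀ s', W.R s s' → csat W a s'
  | .dia a, s => ∃ s', W.R s s' ∧ csat W a s'

/-- Flatness of ML formulas. -/
lemma flatML {AP : Type} (W : Frame AP) (ψ : MDL AP) (h : isML ψ) :
    ∀ T, sat W ψ T ↔ ∀ s ∈ T, csat W ψ s := by
  induction ψ with
  | top => intro T; simp [sat, csat]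
  | bot => intro T; simp [sat, csat, Set.eq_empty_iff_forall_notMem]
  | atom p => intro T; simp [sat, csat]
  | natom p => intro T; simp [sat, csat]
  | dep ps q => exact absurd h (by simp [isML])
  | ndep ps q => exact absurd h (by simp [isML])
  | cor a b iha ihb => exact absurd h (by simp [isML])
  | and a b iha ihb =>
    intro T
    obtain ⟨ha, hb⟩ := h
    simp only [sat, csat, iha ha, ihb hb]
    constructor
    · rintro ⟨h1, h2⟩ s hs; exact ⟨h1 s hs, h2 s hs⟩
    · intro h1; exact ⟨fun s hs => (h1 s hs).1, fun s hs => (h1 s hs).2⟩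
  | or a b iha ihb =>
    intro T
    obtain ⟨ha, hb⟩ := h
    constructor
    · rintro ⟨T₁, T₂, rfl, h1, h2⟩ s hs
      rcases hs with hs | hs
      · exact Or.inl (((iha ha T₁).1 h1) s hs)
      · exact Or.inr (((ihb hb T₂).1 h2) s hs)
    · intro h1
      refine ⟨{s ∈ T | csat W a s}, {s ∈ T | csat W b s}, ?_, ?_, ?_⟩
      · ext s
        constructor
        · intro hs; rcases h1 s hs with h | h
          · exact Or.inl ⟨hs, h⟩
          · exact Or.inr ⟨hs, h⟩
        · rintro (⟨hs, _⟩ | ⟨hs, _⟩) <;> exact hs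
      · exact (iha ha _).2 fun s hs => hs.2
      · exact (ihb hb _).2 fun s hs => hs.2
  | box a iha =>
    intro T
    simp only [sat]
    rw [iha h]
    constructor
    · intro h1 s hs s' hR; exact h1 s' ⟨s, hs, hR⟩
    · rintro h1 s' ⟨s, hs, hR⟩; exact h1 s hs s' hR
  | dia a iha =>
    intro T
    constructor
    · rintro ⟨T', hT', hcov⟩ s hs
      obtain ⟨s', hs', hR⟩ := hcov s hs
      exact ⟨s', hR, ((iha h T').1 hT') s' hs'⟩
    · intro h1
      refine ⟨{s' | csat W a s'}, (iha h _).2 fun s hs => hs, ?_⟩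
      intro s hs
      obtain ⟨s', hR, hc⟩ := h1 s hs
      exact ⟨s', hc, hR⟩

/-- All boolean lists of a given length. -/
def allBools : Nat → List (List Bool)
  | 0 => [[]]
  | n + 1 => (allBools n).flatMap fun bs => [true :: bs, false :: bs]

lemma mem_allBools {bs : List Bool} {n : Nat} (h : bs.length = n) : bs ∈ allBools n := by
  induction bs generalizing n with
  | nil => subst h; simp [allBools]
  | cons b bs ih =>
    subst h
    simp only [List.length_cons, allBools, List.mem_flatMap]
    exact ⟨bs, ih rfl, by cases b <;> simp⟩

lemma length_of_mem_allBools {bs : List Bool} {n : Nat} (h : bs ∈ allBools n) :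
    bs.length = n := by
  induction n generalizing bs with
  | zero => simp [allBools] at h; subst h; rfl
  | succ n ih =>
    simp only [allBools, List.mem_flatMap, List.mem_cons, List.not_mem_nil, or_false,
      List.mem_singleton] at h
    obtain ⟨cs, hcs, hbs⟩ := h
    rcases hbs with h | h <;> subst h <;> simp [ih hcs]

/-- Iterated team disjunction. -/
def bigOr {AP : Type} : List (MDL AP) → MDL AP → MDL AP
  | [], base => base
  | ψ :: l, base => .or ψ (bigOr l base)

lemma isML_bigOr {AP : Type} {l : List (MDL AP)} {base : MDL AP}
    (hl : ∀ ψ ∈ l, isML ψ) (hb : isML base) : isML (bigOr l base) := by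
  induction l with
  | nil => exact hb
  | cons ψ l ih =>
    exact ⟨hl ψ (by simp), ih fun χ hχ => hl χ (by simp [hχ])⟩

lemma csat_bigOr {AP : Type} (W : Frame AP) (l : List (MDL AP)) (base : MDL AP)
    (s : W.S) : csat W (bigOr l base) s ↔ (∃ ψ ∈ l, csat W ψ s) ∨ csat W base s := by
  induction l with
  | nil => simp [bigOr]
  | cons ψ l ih =>
    simp only [bigOr, csat, ih, List.mem_cons]
    constructor
    · rintro (h | ⟨χ, hχ, h⟩ | h)
      · exact Or.inl ⟨ψ, Or.inl rfl, h⟩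
      · exact Or.inl ⟨χ, Or.inr hχ, h⟩
      · exact Or.inr h
    · rintro (⟨χ, (rfl | hχ), h⟩ | h)
      · exact Or.inl h
      · exact Or.inr (Or.inl ⟨χ, hχ, h⟩)
      · exact Or.inr (Or.inr h)

/-- The literal `q` or `¬q` according to `b`. -/
def qlit {AP : Type} (q : AP) (b : Bool) : MDL AP := if b then .atom q else .natom q

/-- ML formula expressing: if the world's valuation on `ps` matches `bs`, then
the truth value of `q` is `b`. -/
def clause {AP : Type} (ps : List AP) (q : AP) (bs : List Bool) (b : Bool) : MDL AP :=
  bigOr ((ps.zip bs).map fun pb => if pb.2 then .natom pb.1 else .atom pb.1) (qlit q b)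

lemma isML_clause {AP : Type} (ps : List AP) (q : AP) (bs : List Bool) (b : Bool) :
    isML (clause ps q bs b) := by
  apply isML_bigOr
  · intro ψ hψ
    simp only [List.mem_map] at hψ
    obtain ⟨pb, _, rfl⟩ := hψ
    cases pb.2 <;> simp [isML]
  · cases b <;> simp [qlit, isML]

lemma csat_clause {AP : Type} (W : Frame AP) (ps : List AP) (q : AP)
    (bs : List Bool) (b : Bool) (s : W.S) :
    csat W (clause ps q bs b) s ↔
      ((∀ pb ∈ ps.zip bs, (pb.1 ∈ W.pi s ↔ pb.2 = true)) → (q ∈ W.pi s ↔ b = true)) := by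
  rw [clause, csat_bigOr]
  have hq : csat W (qlit q b) s ↔ (q ∈ W.pi s ↔ b = true) := by
    cases b <;> simp [qlit, csat]
  rw [hq]
  constructor
  · rintro (⟨ψ, hψ, hc⟩ | h) hmatch
    · exfalso
      simp only [List.mem_map] at hψ
      obtain ⟨pb, hpb, rfl⟩ := hψ
      have hm := hmatch pb hpb
      cases hb : pb.2 <;> rw [hb] at hc hm <;> simp only [csat, Bool.false_eq_true, ↓reduceIte] at hc <;> simp at hm
      · exact hm hc
      · exact hc hm
    · exact h
  · intro h
    by_cases hmatch : ∀ pb ∈ ps.zip bs, (pb.1 ∈ W.pi s ↔ pb.2 = true)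
    · exact Or.inr (h hmatch)
    · push_neg at hmatch
      obtain ⟨pb, hpb, hne⟩ := hmatch
      refine Or.inl ⟨_, List.mem_map_of_mem hpb, ?_⟩
      cases hb : pb.2 <;> rw [hb] at hne <;> simp only [csat, Bool.false_eq_true, ↓reduceIte] <;> simp at hne <;> simp [hne]

/-- Candidate ML formulas for a dependence atom: all conjunctions of clauses,
one clause per valuation in `V`, with a free choice of the `q`-value each. -/
def depCands {AP : Type} (ps : List AP) (q : AP) : List (List Bool) → List (MDL AP)
  | [] => [.top]
  | bs :: rest => (depCands ps q rest).flatMap fun ψ =>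
      [.and (clause ps q bs true) ψ, .and (clause ps q bs false) ψ]

lemma isML_depCands {AP : Type} (ps : List AP) (q : AP) (V : List (List Bool)) :
    ∀ ψ ∈ depCands ps q V, isML ψ := by
  induction V with
  | nil => intro ψ hψ; simp [depCands] at hψ; subst hψ; simp [isML]
  | cons bs rest ih =>
    intro ψ hψ
    simp only [depCands, List.mem_flatMap, List.mem_cons, List.not_mem_nil, or_false,
      List.mem_singleton] at hψ
    obtain ⟨χ, hχ, hψ⟩ := hψ
    rcases hψ with h | h <;> subst h <;> exact ⟨isML_clause _ _ _ _, ih χ hχ⟩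

lemma depCands_complete {AP : Type} (ps : List AP) (q : AP)
    (V : List (List Bool)) (c : List Bool → Bool) :
    ∃ ψ ∈ depCands ps q V, ∀ (W : Frame AP) (s : W.S),
      csat W ψ s ↔ ∀ bs ∈ V, csat W (clause ps q bs (c bs)) s := by
  induction V with
  | nil => exact ⟨.top, by simp [depCands], by simp [csat]⟩
  | cons bs rest ih =>
    obtain ⟨ψ, hψ, hchar⟩ := ih
    refine ⟨.and (clause ps q bs (c bs)) ψ, ?_, ?_⟩
    · simp only [depCands, List.mem_flatMap]
      exact ⟨ψ, hψ, by cases c bs <;> simp⟩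
    · intro W s
      simp only [csat, hchar, List.mem_cons]
      constructor
      · rintro ⟨h1, h2⟩ cs (rfl | hcs)
        · exact h1
        · exact h2 cs hcs
      · intro h
        exact ⟨h bs (Or.inl rfl), fun cs hcs => h cs (Or.inr hcs)⟩

lemma depCands_sound {AP : Type} (ps : List AP) (q : AP)
    {V : List (List Bool)} {ψ : MDL AP} (hψ : ψ ∈ depCands ps q V) :
    ∀ bs ∈ V, ∃ b, ∀ (W : Frame AP) (s : W.S),
      csat W ψ s → csat W (clause ps q bs b) s := by
  induction V generalizing ψ with
  | nil => intro bs hbs; cases hbs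
  | cons cs rest ih =>
    simp only [depCands, List.mem_flatMap, List.mem_cons, List.not_mem_nil, or_false,
      List.mem_singleton] at hψ
    obtain ⟨χ, hχ, hmem⟩ := hψ
    intro bs hbs
    rcases hmem with h | h
    · subst h
      rcases List.mem_cons.1 hbs with rfl | hbs
      · exact ⟨true, fun W s hs => hs.1⟩
      · obtain ⟨b, hb⟩ := ih hχ bs hbs
        exact ⟨b, fun W s hs => hb W s hs.2⟩
    · subst h
      rcases List.mem_cons.1 hbs with rfl | hbs
      · exact ⟨false, fun W s hs => hs.1⟩
      · obtain ⟨b, hb⟩ := ih hχ bs hbs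
        exact ⟨b, fun W s hs => hb W s hs.2⟩

lemma mem_zip_left {α β : Type*} {l : List α} {m : List β}
    (hlen : m.length = l.length) {a : α} (ha : a ∈ l) : ∃ b, (a, b) ∈ l.zip m := by
  induction l generalizing m with
  | nil => cases ha
  | cons x l ih =>
    cases m with
    | nil => simp at hlen
    | cons y m =>
      rcases List.mem_cons.1 ha with rfl | ha
      · exact ⟨y, by simp⟩
      · obtain ⟨b, hb⟩ := ih (by simpa using hlen) ha
        exact ⟨b, by simp [hb]⟩

lemma zip_map_snd {α β : Type*} {l : List α} {f : α → β} {a : α} {b : β}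
    (h : (a, b) ∈ l.zip (l.map f)) : b = f a := by
  induction l with
  | nil => cases h
  | cons x l ih =>
    simp only [List.map_cons, List.zip_cons_cons, List.mem_cons] at h
    rcases h with h | h
    · rw [Prod.mk.injEq] at h
      rw [h.2, h.1]
    · exact ih h

/-- Main inductive lemma: every ⊘-free formula is, on every team, equivalent to
a classical disjunction of "everywhere ψᵢ" for a finite list of ML formulas. -/
lemma main_translation {AP : Type} (φ : MDL AP) (hφ : corFree φ) :
    ∃ L : List (MDL AP), (∀ ψ ∈ L, isML ψ) ∧
      ∀ (W : Frame AP) (T : Set W.S),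
        sat W φ T ↔ ∃ ψ ∈ L, ∀ s ∈ T, csat W ψ s := by
  induction φ with
  | top => exact ⟨[.top], by simp [isML], by simp [sat, csat]⟩
  | bot =>
    refine ⟨[.bot], by simp [isML], ?_⟩
    intro W T
    simp [sat, csat, Set.eq_empty_iff_forall_notMem]
  | atom p => exact ⟨[.atom p], by simp [isML], by simp [sat, csat]⟩
  | natom p => exact ⟨[.natom p], by simp [isML], by simp [sat, csat]⟩
  | ndep ps q =>
    refine ⟨[.bot], by simp [isML], ?_⟩
    intro W T
    simp [sat, csat, Set.eq_empty_iff_forall_notMem]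
  | dep ps q =>
    refine ⟨depCands ps q (allBools ps.length), isML_depCands ps q _, ?_⟩
    intro W T
    constructor
    · intro hdep
      -- choose, for each valuation pattern, the common q-value on that class
      set c : List Bool → Bool := fun bs =>
        if h : ∃ s ∈ T, ∀ pb ∈ ps.zip bs, (pb.1 ∈ W.pi s ↔ pb.2 = true)
        then decide (q ∈ W.pi h.choose) else true with hc
      obtain ⟨ψ, hψ, hchar⟩ := depCands_complete ps q (allBools ps.length) c
      refine ⟨ψ, hψ, ?_⟩
      intro s hs
      rw [hchar]
      intro bs hbs
      rw [csat_clause]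
      intro hmatch
      have hex : ∃ s ∈ T, ∀ pb ∈ ps.zip bs, (pb.1 ∈ W.pi s ↔ pb.2 = true) :=
        ⟨s, hs, hmatch⟩
      obtain ⟨hs₀, hmatch₀⟩ := hex.choose_spec
      have hagree : ∀ p ∈ ps, (p ∈ W.pi s ↔ p ∈ W.pi hex.choose) := by
        intro p hp
        obtain ⟨b, hb⟩ := mem_zip_left (length_of_mem_allBools hbs) hp
        rw [hmatch (p, b) hb, hmatch₀ (p, b) hb]
      have := hdep s hs hex.choose hs₀ hagree
      rw [hc]
      simp only [dif_pos hex]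
      rw [this]
      simp
    · rintro ⟨ψ, hψ, hall⟩ s₁ hs₁ s₂ hs₂ hagree
      have hbs : (ps.map fun p => decide (p ∈ W.pi s₁)) ∈ allBools ps.length :=
        mem_allBools (by simp)
      obtain ⟨b, hb⟩ := depCands_sound ps q hψ (ps.map fun p => decide (p ∈ W.pi s₁)) hbs
      set bs : List Bool := ps.map fun p => decide (p ∈ W.pi s₁) with hbsdef
      have h₁ := (csat_clause W ps q bs b s₁).1 (hb W s₁ (hall s₁ hs₁))
      have h₂ := (csat_clause W ps q bs b s₂).1 (hb W s₂ (hall s₂ hs₂))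
      have hm₁ : ∀ pb ∈ ps.zip bs, (pb.1 ∈ W.pi s₁ ↔ pb.2 = true) := by
        rintro ⟨p, bit⟩ hpb
        rw [hbsdef] at hpb
        have hb' : bit = decide (p ∈ W.pi s₁) := zip_map_snd (f := fun p => decide (p ∈ W.pi s₁)) hpb
        subst hb'
        simp
      have hm₂ : ∀ pb ∈ ps.zip bs, (pb.1 ∈ W.pi s₂ ↔ pb.2 = true) := by
        rintro ⟨p, bit⟩ hpb
        have hmem : p ∈ ps := (List.of_mem_zip hpb).1
        rw [← hagree p hmem]
        exact hm₁ (p, bit) hpb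
      rw [h₁ hm₁, h₂ hm₂]
  | and a b iha ihb =>
    obtain ⟨ha, hb⟩ := hφ
    obtain ⟨L₁, hL₁, hc₁⟩ := iha ha
    obtain ⟨L₂, hL₂, hc₂⟩ := ihb hb
    refine ⟨L₁.flatMap fun ψ₁ => L₂.map fun ψ₂ => .and ψ₁ ψ₂, ?_, ?_⟩
    · intro ψ hψ
      simp only [List.mem_flatMap, List.mem_map] at hψ
      obtain ⟨ψ₁, h₁, ψ₂, h₂, rfl⟩ := hψ
      exact ⟨hL₁ ψ₁ h₁, hL₂ ψ₂ h₂⟩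
    · intro W T
      simp only [sat, hc₁, hc₂]
      constructor
      · rintro ⟨⟨ψ₁, h₁, hall₁⟩, ⟨ψ₂, h₂, hall₂⟩⟩
        refine ⟨.and ψ₁ ψ₂, ?_, fun s hs => ⟨hall₁ s hs, hall₂ s hs⟩⟩
        simp only [List.mem_flatMap, List.mem_map]
        exact ⟨ψ₁, h₁, ψ₂, h₂, rfl⟩
      · rintro ⟨ψ, hψ, hall⟩
        simp only [List.mem_flatMap, List.mem_map] at hψ
        obtain ⟨ψ₁, h₁, ψ₂, h₂, rfl⟩ := hψ
        exact ⟨⟨ψ₁, h₁, fun s hs => (hall s hs).1⟩, ⟨ψ₂, h₂, fun s hs => (hall s hs).2⟩⟩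
  | or a b iha ihb =>
    obtain ⟨ha, hb⟩ := hφ
    obtain ⟨L₁, hL₁, hc₁⟩ := iha ha
    obtain ⟨L₂, hL₂, hc₂⟩ := ihb hb
    refine ⟨L₁.flatMap fun ψ₁ => L₂.map fun ψ₂ => .or ψ₁ ψ₂, ?_, ?_⟩
    · intro ψ hψ
      simp only [List.mem_flatMap, List.mem_map] at hψ
      obtain ⟨ψ₁, h₁, ψ₂, h₂, rfl⟩ := hψ
      exact ⟨hL₁ ψ₁ h₁, hL₂ ψ₂ h₂⟩
    · intro W T
      constructor
      · rintro ⟨T₁, T₂, rfl, h1, h2⟩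
        obtain ⟨ψ₁, hm₁, hall₁⟩ := (hc₁ W T₁).1 h1
        obtain ⟨ψ₂, hm₂, hall₂⟩ := (hc₂ W T₂).1 h2
        refine ⟨.or ψ₁ ψ₂, ?_, ?_⟩
        · simp only [List.mem_flatMap, List.mem_map]
          exact ⟨ψ₁, hm₁, ψ₂, hm₂, rfl⟩
        · rintro s (hs | hs)
          · exact Or.inl (hall₁ s hs)
          · exact Or.inr (hall₂ s hs)
      · rintro ⟨ψ, hψ, hall⟩
        simp only [List.mem_flatMap, List.mem_map] at hψ
        obtain ⟨ψ₁, h₁, ψ₂, h₂, rfl⟩ := hψ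
        refine ⟨{s ∈ T | csat W ψ₁ s}, {s ∈ T | csat W ψ₂ s}, ?_, ?_, ?_⟩
        · ext s
          constructor
          · intro hs
            rcases hall s hs with h | h
            · exact Or.inl ⟨hs, h⟩
            · exact Or.inr ⟨hs, h⟩
          · rintro (⟨hs, _⟩ | ⟨hs, _⟩) <;> exact hs
        · exact (hc₁ W _).2 ⟨ψ₁, h₁, fun s hs => hs.2⟩
        · exact (hc₂ W _).2 ⟨ψ₂, h₂, fun s hs => hs.2⟩
  | cor a b iha ihb => exact absurd hφ (by simp [corFree])
  | box a iha =>
    obtain ⟨L₁, hL₁, hc₁⟩ := iha hφ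
    refine ⟨L₁.map .box, ?_, ?_⟩
    · intro ψ hψ
      simp only [List.mem_map] at hψ
      obtain ⟨ψ₁, h₁, rfl⟩ := hψ
      exact hL₁ ψ₁ h₁
    · intro W T
      simp only [sat, hc₁]
      constructor
      · rintro ⟨ψ₁, h₁, hall⟩
        refine ⟨.box ψ₁, List.mem_map_of_mem h₁, ?_⟩
        intro s hs s' hR
        exact hall s' ⟨s, hs, hR⟩
      · rintro ⟨ψ, hψ, hall⟩
        simp only [List.mem_map] at hψ
        obtain ⟨ψ₁, h₁, rfl⟩ := hψ
        refine ⟨ψ₁, h₁, ?_⟩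
        rintro s' ⟨s, hs, hR⟩
        exact hall s hs s' hR
  | dia a iha =>
    obtain ⟨L₁, hL₁, hc₁⟩ := iha hφ
    refine ⟨L₁.map .dia, ?_, ?_⟩
    · intro ψ hψ
      simp only [List.mem_map] at hψ
      obtain ⟨ψ₁, h₁, rfl⟩ := hψ
      exact hL₁ ψ₁ h₁
    · intro W T
      constructor
      · rintro ⟨T', hT', hcov⟩
        obtain ⟨ψ₁, h₁, hall⟩ := (hc₁ W T').1 hT'
        refine ⟨.dia ψ₁, List.mem_map_of_mem h₁, ?_⟩
        intro s hs
        obtain ⟨s', hs', hR⟩ := hcov s hs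
        exact ⟨s', hR, hall s' hs'⟩
      · rintro ⟨ψ, hψ, hall⟩
        simp only [List.mem_map] at hψ
        obtain ⟨ψ₁, h₁, rfl⟩ := hψ
        refine ⟨{s' | csat W ψ₁ s'}, (hc₁ W _).2 ⟨ψ₁, h₁, fun s hs => hs⟩, ?_⟩
        intro s hs
        obtain ⟨s', hR, hc⟩ := hall s hs
        exact ⟨s', hc, hR⟩

/-- singleton translation into ordinary modal logic. -/
theorem singleton_translation {AP : Type} (φ : MDL AP) (hφ : corFree φ) :
    ∃ ψ : MDL AP, isML ψ ∧
      ∀ (W : Frame AP) (w : W.S),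
        sat W φ ({w} : Set W.S) ↔ sat W ψ ({w} : Set W.S) := by
  obtain ⟨L, hL, hchar⟩ := main_translation φ hφ
  refine ⟨bigOr L .bot, isML_bigOr hL (by simp [isML]), ?_⟩
  intro W w
  rw [hchar, flatML W _ (isML_bigOr hL (by simp [isML]))]
  simp only [Set.mem_singleton_iff, forall_eq, csat_bigOr]
  simp [csat]
end
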